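/- Reduction of language inclusion to output compatibility: let A and B be filters over a common alphabet. Let J = A ⊗ B be their tensor product with every state colored green, let G be the disjoint union of J and a copy of A in which every state is colored red (so L(G) = L(A)), and let F' be a copy of A with every state colored green (so L(F') = L(A) = L(G)). Then L(A) ⊆ L(B) holds if and only if the output compatibility condition holds: for every string s ∈ L(G), C_{F'}(s) ⊆ C_G(s). -/

import Mathlib

/-- A procrustean filter with state type `V`, observation alphabet `Y`, and output set `C`:
initial states `V0`, transition labeling `tr`, and nonempty output sets `out`. -/
structure PFilter (V Y C : Type) where
  V0 : Set V
  tr : V → V → Set Y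
  out : V → Set C
  out_ne : ∀ v, (out v).Nonempty

namespace PFilter

variable {V V' V'' Y C : Type}

/-- One step of tracing: states reachable from some state of `S` along a `y`-labeled edge. -/
def step (F : PFilter V Y C) (S : Set V) (y : Y) : Set V :=
  {w | ∃ v ∈ S, y ∈ F.tr v w}

/-- `V_F(s)`: the set of states reached by the string `s` from some initial state. -/
def reached (F : PFilter V Y C) (s : List Y) : Set V :=
  s.foldl F.step F.V0

/-- The interaction language `L(F)`. -/
def lang (F : PFilter V Y C) : Set (List Y) :=
  {s | (F.reached s).Nonempty}

/-- `C_F(s)`: the set of outputs produced for a string `s`. -/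
def outputs (F : PFilter V Y C) (s : List Y) : Set C :=
  ⋃ w ∈ F.reached s, F.out w

/-- `F'` output simulates `F`: language inclusion and output compatibility. -/
def OutputSimulates (F' : PFilter V' Y C) (F : PFilter V Y C) : Prop :=
  F.lang ⊆ F'.lang ∧ ∀ s ∈ F.lang, F'.outputs s ⊆ F.outputs s

/-- Tracing-deterministic: one initial state and disjoint labels on departing edges. -/
def TracingDet (F : PFilter V Y C) : Prop :=
  (∃ v0 : V, F.V0 = {v0}) ∧
  ∀ v1 v2 v3 : V, v2 ≠ v3 → F.tr v1 v2 ∩ F.tr v1 v3 = ∅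

/-- Vertex single-output: every state has exactly one output. -/
def VertexSingle (F : PFilter V Y C) : Prop :=
  ∀ v : V, ∃ a : C, F.out v = {a}

/-- String single-output: every string in the language has exactly one output. -/
def StringSingle (F : PFilter V Y C) : Prop :=
  ∀ s ∈ F.lang, ∃ a : C, F.outputs s = {a}

/-- The tensor product of two filters (outputs taken from the first component;
only the transition structure matters for reachability statements). -/
def tensor (F : PFilter V Y C) (F' : PFilter V' Y C) : PFilter (V × V') Y C where
  V0 := F.V0 ×ˢ F'.V0
  tr p q := F.tr p.1 q.1 ∩ F'.tr p.2 q.2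
  out p := F.out p.1
  out_ne p := F.out_ne p.1

end PFilter

/-- Two colors: green and red. -/
inductive Color : Type
  | green : Color
  | red : Color

/-- `G`: the disjoint union of `J = A ⊗ B` (every state colored green) with a copy of `A`
(every state colored red). -/
def unionFilter {VA VB Y C : Type} (A : PFilter VA Y C) (B : PFilter VB Y C) :
    PFilter ((VA × VB) ⊕ VA) Y Color where
  V0 := Sum.inl '' (A.V0 ×ˢ B.V0) ∪ Sum.inr '' A.V0
  tr p q :=
    match p, q with
    | Sum.inl (v, v'), Sum.inl (w, w') => A.tr v w ∩ B.tr v' w'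
    | Sum.inr v, Sum.inr w => A.tr v w
    | _, _ => ∅
  out p :=
    match p with
    | Sum.inl _ => {Color.green}
    | Sum.inr _ => {Color.red}
  out_ne p := by cases p with
    | inl _ => exact ⟨Color.green, rfl⟩
    | inr _ => exact ⟨Color.red, rfl⟩

/-- `F'`: a copy of `A` with every state colored green. -/
def greenCopy {VA Y C : Type} (A : PFilter VA Y C) : PFilter VA Y Color where
  V0 := A.V0
  tr := A.tr
  out _ := {Color.green}
  out_ne _ := ⟨Color.green, rfl⟩

section Aux

variable {VA VB Y C : Type} (A : PFilter VA Y C) (B : PFilter VB Y C)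

lemma step_tensor (SA : Set VA) (SB : Set VB) (y : Y) :
    (A.tensor B).step (SA ×ˢ SB) y = (A.step SA y) ×ˢ (B.step SB y) := by
  ext ⟨w, w'⟩
  simp only [PFilter.step, PFilter.tensor, Set.mem_prod, Set.mem_setOf_eq, Set.mem_inter_iff]
  constructor
  · rintro ⟨⟨v, v'⟩, ⟨hv, hv'⟩, hy1, hy2⟩
    exact ⟨⟨v, hv, hy1⟩, ⟨v', hv', hy2⟩⟩
  · rintro ⟨⟨v, hv, hy1⟩, ⟨v', hv', hy2⟩⟩
    exact ⟨⟨v, v'⟩, ⟨hv, hv'⟩, hy1, hy2⟩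

lemma foldl_tensor (s : List Y) : ∀ (SA : Set VA) (SB : Set VB),
    s.foldl (A.tensor B).step (SA ×ˢ SB) = (s.foldl A.step SA) ×ˢ (s.foldl B.step SB) := by
  induction s with
  | nil => intros; rfl
  | cons y t ih => intro SA SB; simp only [List.foldl, step_tensor, ih]

lemma reached_tensor (s : List Y) :
    (A.tensor B).reached s = (A.reached s) ×ˢ (B.reached s) :=
  foldl_tensor A B s A.V0 B.V0

lemma step_union (S1 : Set (VA × VB)) (S2 : Set VA) (y : Y) :
    (unionFilter A B).step (Sum.inl '' S1 ∪ Sum.inr '' S2) y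
      = Sum.inl '' ((A.tensor B).step S1 y) ∪ Sum.inr '' (A.step S2 y) := by
  ext w
  cases w with
  | inl p =>
    obtain ⟨p1, p2⟩ := p
    simp only [PFilter.step, unionFilter, PFilter.tensor, Set.mem_union, Set.mem_image,
      Set.mem_setOf_eq]
    constructor
    · rintro ⟨v, hv, hy⟩
      cases v with
      | inl q =>
        obtain ⟨q1, q2⟩ := q
        refine Or.inl ⟨(p1, p2), ⟨(q1, q2), ?_, hy⟩, rfl⟩
        rcases hv with ⟨x, hx, hxe⟩ | ⟨x, hx, hxe⟩
        · obtain rfl : x = (q1, q2) := Sum.inl_injective hxe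
          exact hx
        · exact absurd hxe (by simp)
      | inr v =>
        exact absurd hy (by simp)
    · rintro (⟨q, ⟨⟨x1, x2⟩, hx, hy⟩, he⟩ | ⟨q, hq, he⟩)
      · obtain rfl : q = (p1, p2) := Sum.inl_injective he
        exact ⟨Sum.inl (x1, x2), Or.inl ⟨(x1, x2), hx, rfl⟩, hy⟩
      · exact absurd he (by simp)
  | inr v =>
    simp only [PFilter.step, unionFilter, Set.mem_union, Set.mem_image, Set.mem_setOf_eq]
    constructor
    · rintro ⟨u, hu, hy⟩
      cases u with
      | inl q => obtain ⟨q1, q2⟩ := q; exact absurd hy (by simp)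
      | inr x =>
        refine Or.inr ⟨v, ⟨x, ?_, hy⟩, rfl⟩
        rcases hu with ⟨z, hz, hze⟩ | ⟨z, hz, hze⟩
        · exact absurd hze (by simp)
        · obtain rfl : z = x := Sum.inr_injective hze
          exact hz
    · rintro (⟨q, hq, he⟩ | ⟨x, ⟨z, hz, hy⟩, he⟩)
      · exact absurd he (by simp)
      · obtain rfl : x = v := Sum.inr_injective he
        exact ⟨Sum.inr z, Or.inr ⟨z, hz, rfl⟩, hy⟩

lemma foldl_union (s : List Y) : ∀ (S1 : Set (VA × VB)) (S2 : Set VA),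
    s.foldl (unionFilter A B).step (Sum.inl '' S1 ∪ Sum.inr '' S2)
      = Sum.inl '' (s.foldl (A.tensor B).step S1) ∪ Sum.inr '' (s.foldl A.step S2) := by
  induction s with
  | nil => intros; rfl
  | cons y t ih => intro S1 S2; simp only [List.foldl, step_union, ih]

lemma reached_union (s : List Y) :
    (unionFilter A B).reached s
      = Sum.inl '' ((A.reached s) ×ˢ (B.reached s)) ∪ Sum.inr '' (A.reached s) := by
  have := foldl_union A B s (A.V0 ×ˢ B.V0) A.V0
  have h0 : (unionFilter A B).V0 = Sum.inl '' (A.V0 ×ˢ B.V0) ∪ Sum.inr '' A.V0 := rfl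
  simpa [PFilter.reached, reached_tensor, foldl_tensor, h0] using this

lemma reached_green (s : List Y) : (greenCopy A).reached s = A.reached s := rfl

end Aux

/-- Reduction of language inclusion to output compatibility:
`L(A) ⊆ L(B)` iff for every `s ∈ L(G)`, `C_{F'}(s) ⊆ C_G(s)`. -/
theorem langIncl_iff_outputCompat {VA VB Y C : Type}
    (A : PFilter VA Y C) (B : PFilter VB Y C) :
    A.lang ⊆ B.lang ↔
      ∀ s ∈ (unionFilter A B).lang,
        (greenCopy A).outputs s ⊆ (unionFilter A B).outputs s := by
  constructor
  · intro h s hs c hc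
    simp only [PFilter.outputs, Set.mem_iUnion, reached_green, greenCopy] at hc
    obtain ⟨v, hv, hcg⟩ := hc
    rcases hcg with rfl
    have hA : (A.reached s).Nonempty := ⟨v, hv⟩
    have hB : (B.reached s).Nonempty := h hA
    obtain ⟨w, hw⟩ := hB
    simp only [PFilter.outputs, Set.mem_iUnion]
    refine ⟨Sum.inl (v, w), ?_, rfl⟩
    rw [reached_union]
    exact Or.inl ⟨(v, w), ⟨hv, hw⟩, rfl⟩
  · intro h s hs
    obtain ⟨v, hv⟩ := hs
    have hsG : s ∈ (unionFilter A B).lang := by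
      refine ⟨Sum.inr v, ?_⟩
      rw [reached_union]
      exact Or.inr ⟨v, hv, rfl⟩
    have hgreen : Color.green ∈ (greenCopy A).outputs s := by
      simp only [PFilter.outputs, Set.mem_iUnion, reached_green, greenCopy]
      exact ⟨v, hv, rfl⟩
    have := h s hsG hgreen
    simp only [PFilter.outputs, Set.mem_iUnion] at this
    obtain ⟨w, hw, hcw⟩ := this
    rw [reached_union] at hw
    cases w with
    | inl q =>
      rcases hw with ⟨p, hp, he⟩ | ⟨p, hp, he⟩
      · obtain rfl : p = q := Sum.inl_injective he
        exact ⟨p.2, hp.2⟩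
      · exact absurd he (by simp)
    | inr x =>
      exact absurd hcw (by simp [unionFilter])
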